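/- Suppose g : ℝ → (0,∞) is continuous with g(z) ~ c e^{-kz} as z → +∞ for constants c > 0, k > 0 (i.e., g(z)e^{kz} → c). Then lim_{z→+∞} g(z)∫₀^z g(y)⁻¹ dy = 1/k. -/

import Mathlib

open Filter intervalIntegral

lemma exp_int (k M z : ℝ) (hk : 0 < k) :
    ∫ y in M..z, Real.exp (k * y) = (Real.exp (k * z) - Real.exp (k * M)) / k := by
  have : ∫ y in M..z, Real.exp (k * y) = k⁻¹ • ∫ x in k*M..k*z, Real.exp x := by
    rw [← intervalIntegral.integral_comp_mul_left (fun x => Real.exp x) hk.ne']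
  rw [this, integral_exp, smul_eq_mul]
  ring

lemma aux_tendsto (h : ℝ → ℝ) (L k : ℝ) (hh : Continuous h) (hk : 0 < k)
    (hL : Tendsto h atTop (nhds L)) :
    Tendsto (fun z => Real.exp (-(k * z)) * ∫ y in (0:ℝ)..z, h y * Real.exp (k * y))
      atTop (nhds (L / k)) := by
  have hcont : Continuous (fun y => h y * Real.exp (k * y)) := by continuity
  rw [Metric.tendsto_atTop]
  intro ε hε
  obtain ⟨M, hM⟩ := (Metric.tendsto_atTop.1 hL) (ε * k / 4) (by positivity)
  set A := ∫ y in (0:ℝ)..M, h y * Real.exp (k * y) with hA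
  have htrans : Tendsto (fun z => (|A| + |L| / k * Real.exp (k * M)) * Real.exp (-(k * z)))
      atTop (nhds 0) := by
    have h1 : Tendsto (fun z : ℝ => Real.exp (-(k * z))) atTop (nhds 0) := by
      have h2 : Tendsto (fun z : ℝ => k * z) atTop atTop := tendsto_id.const_mul_atTop hk
      exact Real.tendsto_exp_neg_atTop_nhds_zero.comp h2
    simpa using h1.const_mul (|A| + |L| / k * Real.exp (k * M))
  obtain ⟨N, hN⟩ := (Metric.tendsto_atTop.1 htrans) (ε / 2) (by positivity)
  refine ⟨max M N, fun z hz => ?_⟩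
  have hzM : M ≤ z := le_trans (le_max_left _ _) hz
  have hzN : N ≤ z := le_trans (le_max_right _ _) hz
  have hsplit : ∫ y in (0:ℝ)..z, h y * Real.exp (k * y)
      = A + ∫ y in M..z, h y * Real.exp (k * y) := by
    rw [hA, intervalIntegral.integral_add_adjacent_intervals
      (hcont.intervalIntegrable _ _) (hcont.intervalIntegrable _ _)]
  have hbound : |∫ y in M..z, (h y - L) * Real.exp (k * y)|
      ≤ ε * k / 4 * ((Real.exp (k * z) - Real.exp (k * M)) / k) := by
    calc |∫ y in M..z, (h y - L) * Real.exp (k * y)|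
        ≤ ∫ y in M..z, |(h y - L) * Real.exp (k * y)| :=
          intervalIntegral.abs_integral_le_integral_abs hzM
      _ ≤ ∫ y in M..z, ε * k / 4 * Real.exp (k * y) := by
          apply intervalIntegral.integral_mono_on hzM
          · apply Continuous.intervalIntegrable; continuity
          · apply Continuous.intervalIntegrable; continuity
          · intro y hy
            rw [abs_mul, abs_of_pos (Real.exp_pos _)]
            have := hM y hy.1
            rw [Real.dist_eq] at this
            exact mul_le_mul_of_nonneg_right this.le (Real.exp_pos _).le
      _ = ε * k / 4 * ((Real.exp (k * z) - Real.exp (k * M)) / k) := by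
          rw [intervalIntegral.integral_const_mul, exp_int k M z hk]
  have hdecomp : ∫ y in M..z, h y * Real.exp (k * y)
      = (∫ y in M..z, (h y - L) * Real.exp (k * y))
        + L * ((Real.exp (k * z) - Real.exp (k * M)) / k) := by
    have : ∫ y in M..z, (h y - L) * Real.exp (k * y)
        = (∫ y in M..z, h y * Real.exp (k * y)) - ∫ y in M..z, L * Real.exp (k * y) := by
      have hi2 : IntervalIntegrable (fun y => L * Real.exp (k * y))
          MeasureTheory.volume M z := by
        apply Continuous.intervalIntegrable; continuity
      rw [← intervalIntegral.integral_sub (hcont.intervalIntegrable _ _) hi2]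
      congr 1; ext y; ring
    rw [this, intervalIntegral.integral_const_mul, exp_int k M z hk]
    ring
  set E := ∫ y in M..z, (h y - L) * Real.exp (k * y) with hE
  have key : Real.exp (-(k * z)) * (∫ y in (0:ℝ)..z, h y * Real.exp (k * y)) - L / k
      = Real.exp (-(k * z)) * A + Real.exp (-(k * z)) * E
        - L / k * Real.exp (k * M) * Real.exp (-(k * z)) := by
    rw [hsplit, hdecomp]
    have hexp : Real.exp (-(k * z)) * Real.exp (k * z) = 1 := by
      rw [← Real.exp_add]; simp
    linear_combination (L / k) * hexp
  rw [Real.dist_eq, key]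
  have e1 : |Real.exp (-(k * z)) * E| ≤ ε / 4 := by
    rw [abs_mul, abs_of_pos (Real.exp_pos _)]
    calc Real.exp (-(k * z)) * |E|
        ≤ Real.exp (-(k * z)) * (ε * k / 4 * ((Real.exp (k * z) - Real.exp (k * M)) / k)) :=
          mul_le_mul_of_nonneg_left hbound (Real.exp_pos _).le
      _ ≤ Real.exp (-(k * z)) * (ε * k / 4 * (Real.exp (k * z) / k)) := by
          gcongr
          linarith [Real.exp_pos (k * M)]
      _ = ε / 4 := by
          rw [Real.exp_neg]
          field_simp
  have e2 : |Real.exp (-(k * z)) * A - L / k * Real.exp (k * M) * Real.exp (-(k * z))|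
      ≤ (|A| + |L| / k * Real.exp (k * M)) * Real.exp (-(k * z)) := by
    calc |Real.exp (-(k * z)) * A - L / k * Real.exp (k * M) * Real.exp (-(k * z))|
        ≤ |Real.exp (-(k * z)) * A| + |L / k * Real.exp (k * M) * Real.exp (-(k * z))| :=
          abs_sub _ _
      _ ≤ (|A| + |L| / k * Real.exp (k * M)) * Real.exp (-(k * z)) := by
          rw [abs_mul, abs_mul, abs_mul, abs_of_pos (Real.exp_pos (-(k*z))),
            abs_of_pos (Real.exp_pos (k*M)), abs_div, abs_of_pos hk]
          ring_nf
          nlinarith [Real.exp_pos (-(k*z)), abs_nonneg A, abs_nonneg L, Real.exp_pos (k*M)]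
  have e3 := hN z hzN
  rw [Real.dist_eq, sub_zero] at e3
  have e3' : (|A| + |L| / k * Real.exp (k * M)) * Real.exp (-(k * z)) < ε / 2 := by
    calc (|A| + |L| / k * Real.exp (k * M)) * Real.exp (-(k * z))
        ≤ |(|A| + |L| / k * Real.exp (k * M)) * Real.exp (-(k * z))| := le_abs_self _
      _ < ε / 2 := e3
  calc |Real.exp (-(k * z)) * A + Real.exp (-(k * z)) * E
        - L / k * Real.exp (k * M) * Real.exp (-(k * z))|
      ≤ |Real.exp (-(k * z)) * A - L / k * Real.exp (k * M) * Real.exp (-(k * z))|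
        + |Real.exp (-(k * z)) * E| := by
        have : Real.exp (-(k * z)) * A + Real.exp (-(k * z)) * E
            - L / k * Real.exp (k * M) * Real.exp (-(k * z))
            = (Real.exp (-(k * z)) * A - L / k * Real.exp (k * M) * Real.exp (-(k * z)))
              + Real.exp (-(k * z)) * E := by ring
        rw [this]; exact abs_add_le _ _
    _ < ε / 2 + ε / 4 := by
        exact add_lt_add_of_lt_of_le (lt_of_le_of_lt e2 e3') e1
    _ < ε := by linarith

theorem matching_limit_plus_infinity (g : ℝ → ℝ) (c k : ℝ)
    (hg : Continuous g) (hgpos : ∀ y, 0 < g y) (hc : 0 < c) (hk : 0 < k)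
    (hlim : Filter.Tendsto (fun z => g z * Real.exp (k * z)) Filter.atTop (nhds c)) :
    Filter.Tendsto (fun z => g z * ∫ y in (0 : ℝ)..z, (g y)⁻¹)
      Filter.atTop (nhds (1 / k)) := by
  set h : ℝ → ℝ := fun y => (g y * Real.exp (k * y))⁻¹ with hh_def
  have hne : ∀ y, g y * Real.exp (k * y) ≠ 0 :=
    fun y => (mul_pos (hgpos y) (Real.exp_pos _)).ne'
  have hhcont : Continuous h := by
    apply Continuous.inv₀ (by continuity) hne
  have hhlim : Tendsto h atTop (nhds c⁻¹) := hlim.inv₀ hc.ne'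
  have haux := aux_tendsto h c⁻¹ k hhcont hk hhlim
  have heq : ∀ y, h y * Real.exp (k * y) = (g y)⁻¹ := by
    intro y
    simp only [hh_def, mul_inv]
    rw [mul_assoc, inv_mul_cancel₀ (Real.exp_pos (k*y)).ne', mul_one]
  have haux' : Tendsto (fun z => Real.exp (-(k * z)) * ∫ y in (0:ℝ)..z, (g y)⁻¹)
      atTop (nhds (c⁻¹ / k)) := by
    refine haux.congr fun z => ?_
    congr 1
    exact intervalIntegral.integral_congr fun y _ => heq y
  have hmul := hlim.mul haux'
  have hval : c * (c⁻¹ / k) = 1 / k := by field_simp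
  rw [hval] at hmul
  refine hmul.congr fun z => ?_
  have hexp : Real.exp (k * z) * Real.exp (-(k * z)) = 1 := by
    rw [← Real.exp_add]; simp
  calc g z * Real.exp (k * z) * (Real.exp (-(k * z)) * ∫ y in (0:ℝ)..z, (g y)⁻¹)
      = (Real.exp (k * z) * Real.exp (-(k * z))) * (g z * ∫ y in (0:ℝ)..z, (g y)⁻¹) := by ring
    _ = g z * ∫ y in (0:ℝ)..z, (g y)⁻¹ := by rw [hexp, one_mul]
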